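/- Let ζ be a complex number with |Im ζ| ≤ π and set l = log(e/(e−1)). Then |(Log(1+e^ζ)/(1+Log(1+e^ζ))) · ((e^{−l} + e^ζ)/e^ζ)| ≤ 1, where Log denotes the principal branch of the complex logarithm (interpreting the expression by its continuous extension at points where 1+e^ζ lies on the branch cut or the expression has a removable singularity). -/

import Mathlib

open Real
set_option maxHeartbeats 2000000

lemma chord {t : ℝ} (h0 : 0 ≤ t) (h1 : t ≤ 1) : Real.exp t ≤ 1 + (Real.exp 1 - 1) * t := by
  have h := convexOn_exp.2 (Set.mem_univ (0:ℝ)) (Set.mem_univ (1:ℝ)) (by linarith : (0:ℝ) ≤ 1 - t)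
    (by linarith : (0:ℝ) ≤ t) (by ring)
  simp only [smul_eq_mul, mul_zero, mul_one, zero_add, Real.exp_zero] at h
  linarith

lemma M0 (x : ℝ) : 0 ≤ Real.exp 1^2 - 1 - Real.exp 1 * Real.exp x *
    (2*(Real.exp 1 - 1) - (Real.exp 1*(x+1)^2 - x^2)) := by
  set E := Real.exp 1 with hE
  have hE1 : (2.7182818283 : ℝ) < E := Real.exp_one_gt_d9
  have hE2 : E < 2.7182818286 := Real.exp_one_lt_d9
  have hX : (0:ℝ) < Real.exp x := Real.exp_pos x
  set X := Real.exp x with hXd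
  rcases le_or_gt (2*(E - 1) - (E*(x+1)^2 - x^2)) 0 with h | h
  · nlinarith [mul_nonneg (mul_nonneg (by linarith : (0:ℝ) ≤ E) hX.le) (neg_nonneg.2 h)]
  · have hx1 : x < 1 := by
      by_contra hc
      push_neg at hc
      nlinarith [mul_nonneg (by linarith : (0:ℝ) ≤ E - 1) (mul_nonneg (by linarith : (0:ℝ) ≤ x - 1) (by linarith : (0:ℝ) ≤ x + 1))]
    have hXb : X * (1 - x) ≤ 1 := by
      have h2 : 1 - x ≤ Real.exp (-x) := by have := Real.add_one_le_exp (-x); linarith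
      calc X * (1 - x) ≤ X * Real.exp (-x) := by
            exact mul_le_mul_of_nonneg_left h2 hX.le
        _ = 1 := by rw [hXd, ← Real.exp_add]; simp
    have hq : 0 ≤ E*(E-1)*x^2 + (E^2+1)*x + (2*E-1) := by
      nlinarith [sq_nonneg (2*E*(E-1)*x + (E^2+1)), sq_nonneg x, sq_nonneg (E-2.7182818283)]
    have h2 : E * (2*(E - 1) - (E*(x+1)^2 - x^2)) ≤ (E^2-1)*(1-x) := by nlinarith
    nlinarith [mul_le_mul_of_nonneg_left hXb (by nlinarith : (0:ℝ) ≤ E * (2*(E - 1) - (E*(x+1)^2 - x^2))), mul_pos hX (by linarith : (0:ℝ) < 1 - x)]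

lemma K0 (x : ℝ) : 0 ≤ (Real.exp 1^2 - 1)*Real.pi^2 - Real.exp 1 * Real.exp x *
    (2*(Real.exp 1 - 1)*Real.pi^2 - 4*(Real.exp 1*(x+1)^2 - x^2)) := by
  set E := Real.exp 1 with hE
  have hE1 : (2.7182818283 : ℝ) < E := Real.exp_one_gt_d9
  have hE2 : E < 2.7182818286 := Real.exp_one_lt_d9
  have hp1 : (3.141592 : ℝ) < Real.pi := Real.pi_gt_d6
  have hp2 : Real.pi < 3.141593 := Real.pi_lt_d6
  have hv1 : (9.8696002 : ℝ) < Real.pi^2 := by nlinarith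
  have hv2 : Real.pi^2 < 9.8696066 := by nlinarith
  set v := Real.pi^2 with hv
  have hE21 : (7.3890560980 : ℝ) ≤ E^2 := by nlinarith
  have hE22 : E^2 ≤ 7.3890560997 := by nlinarith
  have hX : (0:ℝ) < Real.exp x := Real.exp_pos x
  set X := Real.exp x with hXd
  rcases le_or_gt (2*(E - 1)*v - 4*(E*(x+1)^2 - x^2)) 0 with h | h
  · nlinarith [mul_nonneg (mul_nonneg (by linarith : (0:ℝ) ≤ E) hX.le) (neg_nonneg.2 h)]
  · have hx1 : x < 1 := by
      by_contra hc
      push_neg at hc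
      nlinarith [mul_nonneg (by linarith : (0:ℝ) ≤ E - 1) (mul_nonneg (by linarith : (0:ℝ) ≤ x - 1) (by linarith : (0:ℝ) ≤ x + 1)), mul_nonneg (by linarith : (0:ℝ) ≤ E) (by linarith : (0:ℝ) ≤ x - 1)]
    have hXb : E * X * (21/20 - x) ≤ E * (20/19) := by
      have h2 : 21/20 - x ≤ Real.exp (1/20 - x) := by
        have := Real.add_one_le_exp (1/20 - x); linarith
      have h3 : E * X * (21/20 - x) ≤ E * X * Real.exp (1/20 - x) :=
        mul_le_mul_of_nonneg_left h2 (by positivity)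
      have h4 : E * X * Real.exp (1/20 - x) = E * Real.exp (1/20) := by
        have hx20 : x + (1/20 - x) = (1/20 : ℝ) := by ring
        rw [mul_assoc, hXd, ← Real.exp_add, hx20]
      have h5 : Real.exp (1/20) ≤ 20/19 := by
        have h6 : (19/20 : ℝ) ≤ Real.exp (-(1/20)) := by
          have := Real.add_one_le_exp (-(1/20) : ℝ); linarith
        have h7 : Real.exp (1/20) * Real.exp (-(1/20)) = 1 := by
          rw [← Real.exp_add]; simp
        nlinarith [Real.exp_pos (1/20 : ℝ)]
      calc E * X * (21/20 - x) ≤ E * Real.exp (1/20) := by rw [← h4]; exact h3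
        _ ≤ E * (20/19) := by nlinarith
    -- interval bounds for the quadratic's coefficients
    have m1 : (63.057429 : ℝ) ≤ (E^2-1)*v := by nlinarith [mul_nonneg (by linarith : (0:ℝ) ≤ E^2 - 1 - 6.3890560980) (by linarith : (0:ℝ) ≤ v - 9.8696002)]
    have m2 : (E^2-1)*v ≤ 63.057471 := by nlinarith [mul_nonneg (by linarith : (0:ℝ) ≤ 6.3890560997 - (E^2 - 1)) (by linarith : (0:ℝ) ≤ 9.8696066 - v)]
    have m3 : (E^2-E)*v ≤ 46.098705 := by nlinarith [mul_nonneg (by linarith : (0:ℝ) ≤ 4.6707742714 - (E^2 - E)) (by linarith : (0:ℝ) ≤ 9.8696066 - v)]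
    have hb1 : (-0.0000201 : ℝ) ≤ (160/19)*E^2 - (E^2-1)*v + 0.83381992 := by nlinarith
    have hb2 : (160/19)*E^2 - (E^2-1)*v + 0.83381992 ≤ (0.000021 : ℝ) := by nlinarith
    have hA1 : (19.6664 : ℝ) ≤ (80/19)*(E^2-E) := by nlinarith
    have hC1 : (0.272211 : ℝ) ≤ (21/20)*((E^2-1)*v) - (40/19)*((E^2-E)*v) + (80/19)*E^2 := by
      nlinarith
    have hq : 0 ≤ (E^2-1)*v*(21/20 - x) - E * (20/19) * (2*(E - 1)*v - 4*(E*(x+1)^2 - x^2)) := by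
      nlinarith [sq_nonneg (x - 10603/500000), sq_nonneg ((2/25)*x + (25/4)*((160/19)*E^2 - (E^2-1)*v + 0.83381992)), sq_nonneg x, hA1, hC1,
        mul_nonneg (by linarith : (0:ℝ) ≤ (160/19)*E^2 - (E^2-1)*v + 0.83381992 + 0.0000201) (by linarith : (0:ℝ) ≤ 0.000021 - ((160/19)*E^2 - (E^2-1)*v + 0.83381992))]
    nlinarith [mul_le_mul_of_nonneg_left hXb (by linarith : (0:ℝ) ≤ 2*(E - 1)*v - 4*(E*(x+1)^2 - x^2)), mul_pos (mul_pos (by linarith : (0:ℝ) < E) hX) (by linarith : (0:ℝ) < 21/20 - x)]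

lemma D0 (x : ℝ) : 0 ≤ (Real.exp 1 * Real.exp x - (Real.exp 1 - 1)*x - Real.exp 1) *
    (Real.exp 1 * Real.exp x * (2*x+1) - (Real.exp 1+1)*x - Real.exp 1) := by
  set E := Real.exp 1 with hE
  have hE1 : (2.7182818283 : ℝ) < E := Real.exp_one_gt_d9
  have hE2 : E < 2.7182818286 := Real.exp_one_lt_d9
  have hX : (0:ℝ) < Real.exp x := Real.exp_pos x
  set X := Real.exp x with hXd
  have hEX : E * X = Real.exp (x+1) := by rw [hE, hXd, ← Real.exp_add]; congr 1; ring
  rcases le_or_gt 0 x with hx | hx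
  · -- x ≥ 0 : both factors nonneg
    have hXl : x + 1 ≤ X := by have := Real.add_one_le_exp x; linarith
    have hEXl : E*(x+1) ≤ E*X := mul_le_mul_of_nonneg_left hXl (by linarith)
    apply mul_nonneg
    · nlinarith
    · nlinarith [mul_le_mul_of_nonneg_right hEXl (by linarith : (0:ℝ) ≤ 2*x+1), sq_nonneg x]
  rcases le_or_gt x (-1) with hx1 | hx1
  · -- x ≤ -1 : both factors nonneg
    have hXl : x + 2 ≤ E * X := by rw [hEX]; have := Real.add_one_le_exp (x+1); linarith
    have hXu : E * X * (-x) ≤ 1 := by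
      have h1 : -x ≤ Real.exp (-(x+1)) := by have := Real.add_one_le_exp (-(x+1)); linarith
      have h2 : E*X*(-x) ≤ E*X*Real.exp (-(x+1)) :=
        mul_le_mul_of_nonneg_left h1 (by nlinarith)
      have h3 : E*X*Real.exp (-(x+1)) = 1 := by
        have he0 : (x+1) + (-(x+1)) = 0 := by ring
        rw [hEX, ← Real.exp_add, he0, Real.exp_zero]
      linarith
    apply mul_nonneg
    · nlinarith
    · -- 0 ≤ E X (2x+1) - (E+1)x - E, via multiplying by -x > 0
      have h2 : (2*x+1) * 1 ≤ (2*x+1) * (E*X*(-x)) :=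
        mul_le_mul_of_nonpos_left hXu (by linarith)
      have hfac : 0 ≤ ((E+1)*x+1)*(x+1) := by
        nlinarith [mul_nonneg (by nlinarith : (0:ℝ) ≤ -((E+1)*x+1)) (by linarith : (0:ℝ) ≤ -(x+1))]
      by_contra hcon
      push_neg at hcon
      nlinarith [mul_pos (by linarith : (0:ℝ) < -x) (by linarith : (0:ℝ) < -(E * X * (2*x+1) - (E+1)*x - E))]
  · -- -1 < x < 0 : both factors nonpos
    have hc1 : Real.exp (x+1) ≤ 1 + (E-1)*(x+1) := chord (by linarith) (by linarith)
    rw [← hEX] at hc1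
    have hA : E * Real.exp x - (Real.exp 1 - 1)*x - Real.exp 1 ≤ 0 := by nlinarith
    have hB : E * Real.exp x * (2*x+1) - (Real.exp 1+1)*x - Real.exp 1 ≤ 0 := by
      rcases le_or_gt x (-1/2) with hx2 | hx2
      · have hXl : x + 2 ≤ E * X := by rw [hEX]; have := Real.add_one_le_exp (x+1); linarith
        have h2 : (E*X)*(2*x+1) ≤ (x+2)*(2*x+1) :=
          mul_le_mul_of_nonpos_right hXl (by linarith)
        nlinarith [mul_nonneg (by linarith : (0:ℝ) ≤ x+1) (by linarith : (0:ℝ) ≤ E - 2*x - 2)]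
      · have h2 : (E*X)*(2*x+1) ≤ (1 + (E-1)*(x+1))*(2*x+1) :=
          mul_le_mul_of_nonneg_right hc1 (by linarith)
        nlinarith [mul_nonneg (by linarith : (0:ℝ) ≤ -x) (by linarith : (0:ℝ) ≤ x+1)]
    nlinarith [mul_nonneg (neg_nonneg.2 hA) (neg_nonneg.2 hB)]

lemma key (x y : ℝ) (hy : |y| ≤ Real.pi) :
    (x^2+y^2) * (Real.exp (x+1)^2 - 2*Real.exp (x+1)*Real.cos y + 1)
      ≤ Real.exp 1^2 * ((x+1)^2+y^2) * (Real.exp x^2 - 2*Real.exp x*Real.cos y + 1) := by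
  have hE1 : (2.7182818283 : ℝ) < Real.exp 1 := Real.exp_one_gt_d9
  have hX : (0:ℝ) < Real.exp x := Real.exp_pos x
  have hEX : Real.exp (x+1) = Real.exp 1 * Real.exp x := by
    rw [← Real.exp_add]; congr 1; ring
  rw [hEX]
  set E := Real.exp 1 with hE
  set X := Real.exp x with hXd
  set c := Real.cos y with hc
  have hc1 : 1 - y^2/2 ≤ c := Real.one_sub_sq_div_two_le_cos
  have hD := D0 x
  have hM := M0 x
  have hK := K0 x
  rcases le_or_gt 0 (E*(x+1)^2 - x^2 + (E-1)*y^2) with hA | hB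
  · -- case A: use Jordan bound
    have hc2 : c ≤ 1 - 2/Real.pi^2 * y^2 := Real.cos_le_one_sub_mul_cos_sq hy
    have hπ2 : (0:ℝ) < Real.pi^2 := by positivity
    have h2c : 2*y^2 ≤ Real.pi^2*(1-c) := by
      have h3 : Real.pi^2 * (2/Real.pi^2*y^2) ≤ Real.pi^2*(1-c) :=
        mul_le_mul_of_nonneg_left (by linarith) hπ2.le
      have h4 : Real.pi^2 * (2/Real.pi^2*y^2) = 2*y^2 := by field_simp
      linarith
    have t1 : 0 ≤ Real.pi^2 * ((E * X - (E - 1)*x - E) * (E * X * (2*x+1) - (E+1)*x - E)) :=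
      mul_nonneg hπ2.le hD
    have t2 : 0 ≤ y^2 * ((E^2 - 1)*Real.pi^2 - E * X * (2*(E - 1)*Real.pi^2 - 4*(E*(x+1)^2 - x^2))) :=
      mul_nonneg (sq_nonneg y) hK
    have t3 : 0 ≤ E*X*(E-1)*y^4 := mul_nonneg (mul_nonneg (mul_nonneg (by linarith) hX.le) (by linarith)) (by positivity)
    have t4 : 0 ≤ E*X*(Real.pi^2*(1-c) - 2*y^2) * (E*(x+1)^2 - x^2 + (E-1)*y^2) :=
      mul_nonneg (mul_nonneg (by positivity) (by linarith)) hA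
    nlinarith [t1, t2, t3, t4, hπ2]
  · -- case B
    have t2 : 0 ≤ y^2 * (E^2 - 1 - E * X * (2*(E - 1) - (E*(x+1)^2 - x^2))) :=
      mul_nonneg (sq_nonneg y) hM
    have t3 : 0 ≤ E*X*(E-1)*y^4 := mul_nonneg (mul_nonneg (mul_nonneg (by linarith) hX.le) (by linarith)) (by positivity)
    have t4 : 0 ≤ E*X*(y^2 - 2*(1-c)) * (-(E*(x+1)^2 - x^2 + (E-1)*y^2)) :=
      mul_nonneg (mul_nonneg (by positivity) (by linarith)) (by linarith)
    nlinarith [hD, t2, t3, t4]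

theorem stmt_13 (ζ : ℂ) (hζ : |ζ.im| ≤ Real.pi) :
    ‖((Complex.log (1 + Complex.exp ζ) / (1 + Complex.log (1 + Complex.exp ζ))) *
        ((Complex.exp (-(Real.log (Real.exp 1 / (Real.exp 1 - 1)) : ℂ)) + Complex.exp ζ) /
          Complex.exp ζ))‖ ≤ 1 := by
  by_cases h0 : (1 : ℂ) + Complex.exp ζ = 0
  · rw [h0, Complex.log_zero]; simp
  by_cases h1 : (1:ℂ) + Complex.log (1 + Complex.exp ζ) = 0
  · rw [h1]; simp [div_zero]
  -- main case
  have hE1 : (2.7182818283 : ℝ) < Real.exp 1 := Real.exp_one_gt_d9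
  set w := Complex.log (1 + Complex.exp ζ) with hwdef
  have hexpw : Complex.exp w = 1 + Complex.exp ζ := Complex.exp_log h0
  have hzeq : Complex.exp ζ = Complex.exp w - 1 := by rw [hexpw]; ring
  have him : |w.im| ≤ Real.pi := by
    rw [hwdef, Complex.log_im]; exact Complex.abs_arg_le_pi _
  -- the constant
  have hlpos : (0:ℝ) < Real.exp 1 / (Real.exp 1 - 1) := by
    apply div_pos (Real.exp_pos 1); linarith
  have hlreal : Real.exp (-(Real.log (Real.exp 1 / (Real.exp 1 - 1)))) = (Real.exp 1 - 1)/Real.exp 1 := by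
    rw [Real.exp_neg, Real.exp_log hlpos, inv_div]
  have hlval : Complex.exp (-(Real.log (Real.exp 1 / (Real.exp 1 - 1)) : ℂ)) =
      (((Real.exp 1 - 1)/Real.exp 1 : ℝ) : ℂ) := by
    rw [← hlreal, Complex.ofReal_exp, Complex.ofReal_neg]
  have hEne : ((Real.exp 1 : ℝ) : ℂ) ≠ 0 := by
    simpa using Real.exp_ne_zero 1
  have hnum : Complex.exp (-(Real.log (Real.exp 1 / (Real.exp 1 - 1)) : ℂ)) + Complex.exp ζ =
      Complex.exp w - (((Real.exp 1)⁻¹ : ℝ) : ℂ) := by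
    rw [hlval, hzeq]
    push_cast
    field_simp
    ring
  have hfact : Complex.exp (w+1) - 1 = (Complex.exp w - (((Real.exp 1)⁻¹ : ℝ) : ℂ)) * ((Real.exp 1 : ℝ) : ℂ) := by
    rw [Complex.exp_add]
    have h2 : Complex.exp 1 = ((Real.exp 1 : ℝ) : ℂ) := by
      rw [Complex.ofReal_exp, Complex.ofReal_one]
    rw [h2]
    push_cast
    field_simp
  have habs1 : ‖Complex.exp w - (((Real.exp 1)⁻¹ : ℝ) : ℂ)‖ * Real.exp 1 =
      ‖Complex.exp (w+1) - 1‖ := by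
    rw [hfact, norm_mul, Complex.norm_real, Real.norm_eq_abs, abs_of_pos (Real.exp_pos 1)]
  -- reduce goal to product inequality
  rw [norm_mul, norm_div, norm_div, div_mul_div_comm, div_le_one (by
    apply mul_pos
    · exact (norm_pos_iff.mpr h1)
    · exact norm_pos_iff.mpr (Complex.exp_ne_zero ζ))]
  rw [hnum, hzeq]
  -- goal : abs w * abs (exp w - E⁻¹) ≤ abs (1+w) * abs (exp w - 1)
  -- squares
  have hexp2 : ∀ u : ℂ, (‖Complex.exp u - 1‖)^2 =
      Real.exp u.re^2 - 2*Real.exp u.re * Real.cos u.im + 1 := by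
    intro u
    rw [Complex.sq_norm, Complex.normSq_apply]
    simp only [Complex.sub_re, Complex.sub_im, Complex.exp_re, Complex.exp_im, Complex.one_re,
      Complex.one_im]
    nlinarith [Real.sin_sq_add_cos_sq u.im]
  have eq1 : (‖w‖)^2 = w.re^2 + w.im^2 := by
    rw [Complex.sq_norm, Complex.normSq_apply]; ring
  have eq2 : (‖1+w‖)^2 = (w.re+1)^2 + w.im^2 := by
    rw [Complex.sq_norm, Complex.normSq_apply]
    simp only [Complex.add_re, Complex.add_im, Complex.one_re, Complex.one_im]
    ring
  have eq3 : (‖Complex.exp (w+1) - 1‖)^2 =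
      Real.exp (w.re+1)^2 - 2*Real.exp (w.re+1)*Real.cos w.im + 1 := by
    rw [hexp2 (w+1)]
    simp only [Complex.add_re, Complex.add_im, Complex.one_re, Complex.one_im, add_zero]
  have eq4 : (‖Complex.exp w - 1‖)^2 =
      Real.exp w.re^2 - 2*Real.exp w.re * Real.cos w.im + 1 := hexp2 w
  have hk := key w.re w.im him
  have hsq : (‖w‖ * ‖Complex.exp (w+1) - 1‖)^2 ≤
      (Real.exp 1 * (‖1+w‖ * ‖Complex.exp w - 1‖))^2 := by
    rw [mul_pow, mul_pow, mul_pow, eq1, eq2, eq3, eq4]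
    nlinarith [hk]
  have hmain : ‖w‖ * ‖Complex.exp (w+1) - 1‖ ≤
      Real.exp 1 * (‖1+w‖ * ‖Complex.exp w - 1‖) := by
    have ha : 0 ≤ ‖w‖ * ‖Complex.exp (w+1) - 1‖ :=
      mul_nonneg (norm_nonneg _) (norm_nonneg _)
    have hb : 0 ≤ Real.exp 1 * (‖1+w‖ * ‖Complex.exp w - 1‖) := by
      positivity
    exact (pow_le_pow_iff_left₀ ha hb two_ne_zero).mp hsq
  have hgoal' : (‖w‖ * ‖Complex.exp w - (((Real.exp 1)⁻¹ : ℝ) : ℂ)‖) * Real.exp 1 ≤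
      (‖1+w‖ * ‖Complex.exp w - 1‖) * Real.exp 1 := by
    rw [mul_assoc, habs1]
    linarith [hmain]
  exact le_of_mul_le_mul_right hgoal' (Real.exp_pos 1)
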